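/- Define F(ν) = ((5/4)·ν² + (ν/4)·√(ν² + 96)) / (1 + (13/48)·ν² + (5/48)·ν·√(ν² + 96)) for ν ≥ 0. Then: (a) F(0) = 0; (b) F is strictly increasing on [0, ∞); (c) F(ν) → 4 as ν → ∞; and (d) for every ε with 0 < ε ≤ 2, F((4 − 2ε)/√(ε·(ε + 1))) = 4 − 2ε. -/
import Mathlib

noncomputable def F (ν : ℝ) : ℝ :=
  ((5 / 4) * ν ^ 2 + (ν / 4) * Real.sqrt (ν ^ 2 + 96)) /
    (1 + (13 / 48) * ν ^ 2 + (5 / 48) * ν * Real.sqrt (ν ^ 2 + 96))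

lemma F_key (ν : ℝ) (hν : 0 ≤ ν) :
    F ν = 4 - 64 / (ν ^ 2 + 16 + ν * Real.sqrt (ν ^ 2 + 96)) := by
  have h96 : (0:ℝ) ≤ ν ^ 2 + 96 := by positivity
  set s := Real.sqrt (ν ^ 2 + 96) with hsdef
  have hs : s ^ 2 = ν ^ 2 + 96 := Real.sq_sqrt h96
  have hs0 : 0 < s := Real.sqrt_pos.2 (by positivity)
  have hns : 0 ≤ ν * s := mul_nonneg hν hs0.le
  have hd1 : (0:ℝ) < 1 + (13 / 48) * ν ^ 2 + (5 / 48) * ν * s := by nlinarith [sq_nonneg ν]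
  have hd2 : (0:ℝ) < ν ^ 2 + 16 + ν * s := by nlinarith [sq_nonneg ν]
  rw [F, ← hsdef, div_eq_iff hd1.ne']
  field_simp
  ring_nf
  nlinarith [hs, sq_nonneg ν]

/-- Properties of the function ν ↦ ν·H(ν) arising in the Alternative model's
maximum-likelihood estimation of ν in Test case 1. -/
theorem F_properties :
    F 0 = 0 ∧
      StrictMonoOn F (Set.Ici 0) ∧
      Filter.Tendsto F Filter.atTop (nhds 4) ∧
      ∀ ε : ℝ, 0 < ε → ε ≤ 2 →
        F ((4 - 2 * ε) / Real.sqrt (ε * (ε + 1))) = 4 - 2 * ε := by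
  refine ⟨by simp [F], ?_, ?_, ?_⟩
  · intro a ha b hb hab
    have ha' : (0:ℝ) ≤ a := ha
    have hb' : (0:ℝ) ≤ b := hb
    rw [F_key a ha', F_key b hb']
    have hsa : (0:ℝ) < Real.sqrt (a ^ 2 + 96) := Real.sqrt_pos.2 (by positivity)
    have hsb : (0:ℝ) < Real.sqrt (b ^ 2 + 96) := Real.sqrt_pos.2 (by positivity)
    have hAB : a ^ 2 + 16 + a * Real.sqrt (a ^ 2 + 96) <
        b ^ 2 + 16 + b * Real.sqrt (b ^ 2 + 96) := by
      have h1 : a ^ 2 < b ^ 2 := by nlinarith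
      have h2 : Real.sqrt (a ^ 2 + 96) ≤ Real.sqrt (b ^ 2 + 96) :=
        Real.sqrt_le_sqrt (by nlinarith)
      have h3 : a * Real.sqrt (a ^ 2 + 96) ≤ b * Real.sqrt (b ^ 2 + 96) :=
        mul_le_mul hab.le h2 hsa.le hb'
      linarith
    have hA : (0:ℝ) < a ^ 2 + 16 + a * Real.sqrt (a ^ 2 + 96) := by
      nlinarith [mul_nonneg ha' hsa.le]
    have := div_lt_div_of_pos_left (show (0:ℝ) < 64 by norm_num) hA hAB
    linarith
  · have hg : Filter.Tendsto (fun ν : ℝ => ν ^ 2 + 16 + ν * Real.sqrt (ν ^ 2 + 96))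
        Filter.atTop Filter.atTop := by
      have h1 : Filter.Tendsto (fun ν : ℝ => ν ^ 2) Filter.atTop Filter.atTop :=
        Filter.tendsto_pow_atTop two_ne_zero
      refine Filter.tendsto_atTop_mono' _ ?_ h1
      filter_upwards [Filter.eventually_ge_atTop (0:ℝ)] with ν hν
      have h2 : 0 ≤ ν * Real.sqrt (ν ^ 2 + 96) := mul_nonneg hν (Real.sqrt_nonneg _)
      nlinarith
    have h0 : Filter.Tendsto (fun ν : ℝ => 4 - 64 / (ν ^ 2 + 16 + ν * Real.sqrt (ν ^ 2 + 96)))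
        Filter.atTop (nhds 4) := by
      have := (tendsto_const_nhds (x := (4:ℝ)) (f := Filter.atTop)).sub
        (Filter.Tendsto.div_atTop (tendsto_const_nhds (x := (64:ℝ))) hg)
      simpa using this
    apply h0.congr'
    filter_upwards [Filter.eventually_ge_atTop (0:ℝ)] with ν hν
    exact (F_key ν hν).symm
  · intro ε hε1 hε2
    have hu2 : (0:ℝ) < ε * (ε + 1) := by nlinarith
    set u := Real.sqrt (ε * (ε + 1)) with hudef
    have hu : u ^ 2 = ε * (ε + 1) := Real.sq_sqrt hu2.le
    have hu0 : 0 < u := Real.sqrt_pos.2 hu2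
    set ν := (4 - 2 * ε) / u with hνdef
    have hν : 0 ≤ ν := div_nonneg (by linarith) hu0.le
    have hsq : ν ^ 2 + 96 = (2 * (5 * ε + 2) / u) ^ 2 := by
      have hu' : u * u = ε * (ε + 1) := by nlinarith [hu]
      rw [hνdef]
      field_simp
      simp only [hu, hu']
      ring
    have hs : Real.sqrt (ν ^ 2 + 96) = 2 * (5 * ε + 2) / u := by
      rw [hsq, Real.sqrt_sq (by positivity)]
    rw [F_key ν hν, hs]
    have hden : ν ^ 2 + 16 + ν * (2 * (5 * ε + 2) / u) = 32 / ε := by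
      have hu' : u * u = ε * (ε + 1) := by nlinarith [hu]
      rw [hνdef]
      field_simp
      simp only [hu, hu']
      ring
    rw [hden]
    field_simp
    ring
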